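/- Two contexts (G₁, L₁) and (G₂, L₂) are compatible (have a common upper bound in ≤) if and only if L₁ is a suffix of L₂ or L₂ is a suffix of L₁; moreover, any two compatible contexts have a least upper bound ⊔, computed by: (Γ,x) ⊔ (Δ,x) = (Γ ⊔ Δ),x; (Γ,x) ⊔ (G, nil) = (Γ ⊔ (G \ {x}, nil)),x; symmetrically; and (G₁, nil) ⊔ (G₂, nil) = (G₁ ∪ G₂, nil). -/

import Mathlib

abbrev Var := ℕ
abbrev Ctx := Finset Var × List Var

/-- `Γ,x` : extend the local part with `x` as innermost (rightmost) variable.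
Lists represent local contexts with head = outermost (leftmost). -/
def Ctx.snoc (Γ : Ctx) (x : Var) : Ctx := (Γ.1, Γ.2 ++ [x])

/-- The least partial order on contexts generated by
`(G,L) < (G ∪ {x}, L)` for `x ∉ G` and `(G,L) < (G \ {x}, x::L)`. -/
inductive CtxLe : Ctx → Ctx → Prop
  | refl (Γ : Ctx) : CtxLe Γ Γ
  | trans {Γ Δ Θ : Ctx} : CtxLe Γ Δ → CtxLe Δ Θ → CtxLe Γ Θ
  | glob (G : Finset Var) (L : List Var) (x : Var) (h : x ∉ G) :
      CtxLe (G, L) (insert x G, L)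
  | loc (G : Finset Var) (L : List Var) (x : Var) :
      CtxLe (G, L) (G.erase x, x :: L)

def Compatible (Γ Δ : Ctx) : Prop := ∃ Θ, CtxLe Γ Θ ∧ CtxLe Δ Θ

/-- Auxiliary supremum on contexts whose local lists have head = innermost. -/
def supAux : Finset Var → List Var → Finset Var → List Var → Option (Finset Var × List Var)
  | G₁, [], G₂, [] => some (G₁ ∪ G₂, [])
  | G₁, x :: l₁, G₂, [] =>
      (supAux G₁ l₁ (G₂.erase x) []).map fun p => (p.1, x :: p.2)
  | G₁, [], G₂, x :: l₂ =>
      (supAux (G₁.erase x) [] G₂ l₂).map fun p => (p.1, x :: p.2)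
  | G₁, x :: l₁, G₂, y :: l₂ =>
      if x = y then (supAux G₁ l₁ G₂ l₂).map fun p => (p.1, x :: p.2) else none
  termination_by _ l₁ _ l₂ => l₁.length + l₂.length

/-- The (partial) supremum `Γ ⊔ Δ` of two contexts. -/
def ctxSup (Γ Δ : Ctx) : Option Ctx :=
  (supAux Γ.1 Γ.2.reverse Δ.1 Δ.2.reverse).map fun p => (p.1, p.2.reverse)

/-! ### Auxiliary lemmas -/

lemma ctxLe_glob_subset {G G' : Finset Var} (L : List Var) (h : G ⊆ G') :
    CtxLe (G, L) (G', L) := by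
  have key : ∀ n (G : Finset Var), G ⊆ G' → (G' \ G).card = n → CtxLe (G, L) (G', L) := by
    intro n
    induction n with
    | zero =>
      intro G hs hc
      have : G' = G := by
        apply Finset.Subset.antisymm _ hs
        intro a ha
        by_contra hna
        have : a ∈ G' \ G := Finset.mem_sdiff.2 ⟨ha, hna⟩
        simp [Finset.card_eq_zero.1 hc] at this
      rw [this]; exact CtxLe.refl _
    | succ n ih =>
      intro G hs hc
      obtain ⟨x, hx⟩ : (G' \ G).Nonempty := Finset.card_pos.1 (by omega)
      obtain ⟨hxG', hxG⟩ := Finset.mem_sdiff.1 hx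
      refine CtxLe.trans (CtxLe.glob G L x hxG) (ih _ ?_ ?_)
      · exact Finset.insert_subset hxG' hs
      · rw [Finset.sdiff_insert, Finset.card_erase_of_mem hx, hc]
        omega
  exact key _ G h rfl

lemma ctxLe_suffix_subset : ∀ {Γ Δ : Ctx}, CtxLe Γ Δ →
    ∃ M : List Var, Δ.2 = M ++ Γ.2 ∧ Γ.1 ⊆ Δ.1 ∪ M.toFinset := by
  intro Γ Δ h
  induction h with
  | refl Γ => exact ⟨[], rfl, by simp⟩
  | trans h1 h2 ih1 ih2 =>
    obtain ⟨M₁, e1, s1⟩ := ih1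
    obtain ⟨M₂, e2, s2⟩ := ih2
    refine ⟨M₂ ++ M₁, by simp [e2, e1], ?_⟩
    intro a ha
    have h1 := s1 ha
    simp only [Finset.mem_union, List.mem_toFinset, List.mem_append] at *
    rcases h1 with h1 | h1
    · have := s2 h1
      simp only [Finset.mem_union, List.mem_toFinset] at this
      tauto
    · tauto
  | glob G L x h =>
    exact ⟨[], rfl, by intro a ha; simp only [Finset.mem_union, Finset.mem_insert]; tauto⟩
  | loc G L x =>
    refine ⟨[x], rfl, ?_⟩
    intro a ha
    simp only [Finset.mem_union, Finset.mem_erase, List.toFinset_cons, List.toFinset_nil,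
      insert_empty_eq, Finset.mem_insert, Finset.mem_singleton]
    by_cases hax : a = x <;> tauto

lemma ctxLe_of_subset_append {G G' : Finset Var} (M L : List Var)
    (h : G ⊆ G' ∪ M.toFinset) : CtxLe (G, L) (G', M ++ L) := by
  induction M generalizing G' with
  | nil => simpa using ctxLe_glob_subset L (by simpa using h)
  | cons x M' ih =>
    have h1 : G ⊆ (insert x G') ∪ M'.toFinset := by
      intro a ha
      have := h ha
      simp only [Finset.mem_union, List.toFinset_cons, Finset.mem_insert,
        List.mem_toFinset] at *
      tauto
    refine CtxLe.trans (ih h1) (CtxLe.trans (CtxLe.loc (insert x G') (M' ++ L) x) ?_)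
    exact ctxLe_glob_subset _ (by intro a ha; simp only [Finset.mem_erase, Finset.mem_insert] at ha; tauto)

lemma ctxLe_iff (G G' : Finset Var) (L L' : List Var) :
    CtxLe (G, L) (G', L') ↔ ∃ M, L' = M ++ L ∧ G ⊆ G' ∪ M.toFinset := by
  constructor
  · intro h; exact ctxLe_suffix_subset h
  · rintro ⟨M, rfl, hs⟩; exact ctxLe_of_subset_append M L hs

lemma supAux_nil_left : ∀ (r : List Var) (G₁ G₂ : Finset Var),
    supAux G₁ [] G₂ r = some (G₁ \ r.toFinset ∪ G₂, r) := by
  intro r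
  induction r with
  | nil => intro G₁ G₂; simp [supAux]
  | cons x l ih =>
    intro G₁ G₂
    rw [supAux, ih]
    simp only [Option.map_some]
    have he : G₁.erase x \ l.toFinset = G₁ \ (x :: l).toFinset := by
      ext b
      simp only [Finset.mem_sdiff, Finset.mem_erase, List.toFinset_cons,
        Finset.mem_insert, List.mem_toFinset]
      tauto
    rw [he]

lemma supAux_nil_right : ∀ (r : List Var) (G₁ G₂ : Finset Var),
    supAux G₁ r G₂ [] = some (G₁ ∪ G₂ \ r.toFinset, r) := by
  intro r
  induction r with
  | nil => intro G₁ G₂; simp [supAux]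
  | cons x l ih =>
    intro G₁ G₂
    rw [supAux, ih]
    simp only [Option.map_some]
    have he : G₂.erase x \ l.toFinset = G₂ \ (x :: l).toFinset := by
      ext b
      simp only [Finset.mem_sdiff, Finset.mem_erase, List.toFinset_cons,
        Finset.mem_insert, List.mem_toFinset]
      tauto
    rw [he]

lemma supAux_common : ∀ (l : List Var) (G₁ G₂ : Finset Var) (r₁ r₂ : List Var),
    supAux G₁ (l ++ r₁) G₂ (l ++ r₂) =
      (supAux G₁ r₁ G₂ r₂).map fun p => (p.1, l ++ p.2) := by
  intro l
  induction l with
  | nil =>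
    intro G₁ G₂ r₁ r₂
    simp
  | cons x l ih =>
    intro G₁ G₂ r₁ r₂
    show supAux G₁ (x :: (l ++ r₁)) G₂ (x :: (l ++ r₂)) = _
    rw [supAux]
    simp only [if_pos rfl, ih, Option.map_map]
    rfl

lemma supAux_comm : ∀ (l₁ l₂ : List Var) (G₁ G₂ : Finset Var),
    supAux G₁ l₁ G₂ l₂ = supAux G₂ l₂ G₁ l₁ := by
  intro l₁
  induction l₁ with
  | nil =>
    intro l₂ G₁ G₂
    rw [supAux_nil_left, supAux_nil_right, Finset.union_comm]
  | cons x l₁ ih =>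
    intro l₂ G₁ G₂
    cases l₂ with
    | nil => rw [supAux_nil_left, supAux_nil_right, Finset.union_comm]
    | cons y l₂ =>
      rw [supAux, supAux]
      by_cases h : x = y
      · subst h; simp [ih]
      · rw [if_neg h, if_neg fun hyx : y = x => h hyx.symm]

lemma ctxSup_comm (Γ Δ : Ctx) : ctxSup Γ Δ = ctxSup Δ Γ := by
  unfold ctxSup
  rw [supAux_comm]

lemma lub_helper (G₁ G₂ : Finset Var) (L₁ M : List Var) :
    ∃ Θ : Ctx, ctxSup (G₁, L₁) (G₂, M ++ L₁) = some Θ ∧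
      CtxLe (G₁, L₁) Θ ∧ CtxLe (G₂, M ++ L₁) Θ ∧
      ∀ Ψ : Ctx, CtxLe (G₁, L₁) Ψ → CtxLe (G₂, M ++ L₁) Ψ → CtxLe Θ Ψ := by
  refine ⟨(G₁ \ M.toFinset ∪ G₂, M ++ L₁), ?_, ?_, ?_, ?_⟩
  · unfold ctxSup
    have e : (M ++ L₁).reverse = L₁.reverse ++ M.reverse := by simp
    simp only [e]
    have h1 : supAux G₁ L₁.reverse G₂ (L₁.reverse ++ M.reverse) =
        (supAux G₁ [] G₂ M.reverse).map fun p => (p.1, L₁.reverse ++ p.2) := by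
      have := supAux_common L₁.reverse G₁ G₂ [] M.reverse
      simpa using this
    rw [h1, supAux_nil_left]
    simp
  · apply ctxLe_of_subset_append
    intro a ha
    simp only [Finset.mem_union, Finset.mem_sdiff, List.mem_toFinset]
    by_cases h : a ∈ M.toFinset <;> simp only [List.mem_toFinset] at h <;> tauto
  · exact ctxLe_glob_subset _ (Finset.subset_union_right)
  · rintro ⟨H, K⟩ h1 h2
    obtain ⟨N₁, e1, s1⟩ := ctxLe_suffix_subset h1
    obtain ⟨N₂, e2, s2⟩ := ctxLe_suffix_subset h2
    simp only at e1 e2 s1 s2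
    have eN : N₁ = N₂ ++ M := by
      apply List.append_cancel_right (bs := L₁)
      rw [← e1, e2]
      simp
    rw [e2]
    apply ctxLe_of_subset_append
    intro a ha
    simp only [Finset.mem_union, Finset.mem_sdiff, List.mem_toFinset] at ha ⊢
    rcases ha with ⟨haG, haM⟩ | haG
    · have := s1 haG
      simp only [eN, Finset.mem_union, List.mem_toFinset, List.mem_append] at this
      tauto
    · have := s2 haG
      simp only [Finset.mem_union, List.mem_toFinset] at this
      tauto

/-- Two contexts are compatible iff one local part is a suffix of the other;
moreover compatible contexts have a least upper bound, computed by `ctxSup`. -/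
theorem compatible_iff_suffix_and_lub (G₁ G₂ : Finset Var) (L₁ L₂ : List Var) :
    (Compatible (G₁, L₁) (G₂, L₂) ↔ (L₁ <:+ L₂ ∨ L₂ <:+ L₁)) ∧
    (Compatible (G₁, L₁) (G₂, L₂) →
      ∃ Θ : Ctx, ctxSup (G₁, L₁) (G₂, L₂) = some Θ ∧
        CtxLe (G₁, L₁) Θ ∧ CtxLe (G₂, L₂) Θ ∧
        ∀ Ψ : Ctx, CtxLe (G₁, L₁) Ψ → CtxLe (G₂, L₂) Ψ → CtxLe Θ Ψ) := by
  have hiff : Compatible (G₁, L₁) (G₂, L₂) ↔ (L₁ <:+ L₂ ∨ L₂ <:+ L₁) := by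
    constructor
    · rintro ⟨⟨H, K⟩, h1, h2⟩
      obtain ⟨N₁, e1, -⟩ := ctxLe_suffix_subset h1
      obtain ⟨N₂, e2, -⟩ := ctxLe_suffix_subset h2
      exact List.suffix_or_suffix_of_suffix ⟨N₁, e1.symm⟩ ⟨N₂, e2.symm⟩
    · rintro (⟨M, rfl⟩ | ⟨M, rfl⟩)
      · obtain ⟨Θ, -, hb1, hb2, -⟩ := lub_helper G₁ G₂ L₁ M
        exact ⟨Θ, hb1, hb2⟩
      · obtain ⟨Θ, -, hb1, hb2, -⟩ := lub_helper G₂ G₁ L₂ M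
        exact ⟨Θ, hb2, hb1⟩
  refine ⟨hiff, ?_⟩
  intro hc
  rcases hiff.1 hc with ⟨M, rfl⟩ | ⟨M, rfl⟩
  · exact lub_helper G₁ G₂ L₁ M
  · obtain ⟨Θ, hsup, hb1, hb2, hl⟩ := lub_helper G₂ G₁ L₂ M
    exact ⟨Θ, by rw [ctxSup_comm]; exact hsup, hb2, hb1, fun Ψ p q => hl Ψ q p⟩
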